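/- Let d ≥ 1, 0 < λ ≤ Λ, C₀ > c₀ > 0, K > 0, let ν ∈ ℝ^d be a unit vector, let c₁, c₂ : ℝ^{d+1} → ℝ be continuous functions bounded in absolute value by K, and let ξ : ℝ^{d+1} → S^{d−1} be a continuous unit vector field. Then there exist constants c > 0 and C > 0, depending only on λ, Λ, d, c₀, C₀ and K, with the following property: for every ε > 0 and L > 0 with Lε ≤ c, if w is upper semicontinuous on closure(Q_L), is a viscosity subsolution of ∂_t w − P⁺(D²w) − (ε c₁(x,t) + ε³ c₂(x,t)·t) ξ(x,t)·Dw = 0 in Q_L, satisfies w ≤ c₀ on closure(Q_L) ∩ ∂P_ν and w ≤ C₀ on closure(Q_L), then for every R < L one has w(x,t) ≤ c₀ + C·R/L for all (x,t) ∈ Q_R. -/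

import Mathlib

open Set Filter Topology
open scoped Classical

noncomputable section

abbrev Mat (d : ℕ) := Matrix (Fin d) (Fin d) ℝ
abbrev Spc (d : ℕ) := EuclideanSpace ℝ (Fin d)

/-- Euclidean dot product. -/
def dotR {d : ℕ} (x y : Spc d) : ℝ := ∑ i, x i * y i

/-- The vector in `ℝ^d` with integer coordinates `k`. -/
def intVec {d : ℕ} (k : Fin d → ℤ) : Spc d :=
  (WithLp.equiv 2 (Fin d → ℝ)).symm fun i => (k i : ℝ)

/-- A direction is rational if it is a real multiple of a nonzero integer vector. -/
def IsRatDir {d : ℕ} (ν : Spc d) : Prop :=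
  ∃ k : Fin d → ℤ, intVec k ≠ 0 ∧ ∃ c : ℝ, ν = c • intVec k

/-- Pucci maximal operator `P⁺(M) = Σ_{e>0} Λ e + Σ_{e<0} λ e` over the eigenvalues of `M`. -/
noncomputable def pucciPlus (lam Lam : ℝ) {d : ℕ} (M : Mat d) : ℝ :=
  if hM : M.IsHermitian then
    ∑ i, (Lam * max (hM.eigenvalues i) 0 + lam * min (hM.eigenvalues i) 0)
  else 0

noncomputable def timeDeriv {d : ℕ} (φ : Spc d × ℝ → ℝ) (p : Spc d × ℝ) : ℝ :=
  deriv (fun s => φ (p.1, s)) p.2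

noncomputable def spaceGrad {d : ℕ} (φ : Spc d × ℝ → ℝ) (p : Spc d × ℝ) : Spc d :=
  (WithLp.equiv 2 (Fin d → ℝ)).symm fun i =>
    fderiv ℝ (fun y => φ (y, p.2)) p.1 (EuclideanSpace.single i 1)

noncomputable def spaceHess {d : ℕ} (φ : Spc d × ℝ → ℝ) (p : Spc d × ℝ) : Mat d :=
  Matrix.of fun i j =>
    fderiv ℝ (fun y => (fderiv ℝ (fun z => φ (z, p.2)) y) (EuclideanSpace.single j 1))
      p.1 (EuclideanSpace.single i 1)

/-- Viscosity subsolution of `∂ₜ u - H(D²u, Du, (x,t)) = 0` on `O`. -/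
def ViscSubsol {d : ℕ} (O : Set (Spc d × ℝ)) (u : Spc d × ℝ → ℝ)
    (H : Mat d → Spc d → Spc d × ℝ → ℝ) : Prop :=
  ∀ φ : Spc d × ℝ → ℝ, ∀ p ∈ O, ContDiffAt ℝ 2 φ p →
    IsLocalMaxOn (fun q => u q - φ q) O p →
    timeDeriv φ p - H (spaceHess φ p) (spaceGrad φ p) p ≤ 0

/-- Viscosity supersolution of `∂ₜ u - H(D²u, Du, (x,t)) = 0` on `O`. -/
def ViscSupersol {d : ℕ} (O : Set (Spc d × ℝ)) (u : Spc d × ℝ → ℝ)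
    (H : Mat d → Spc d → Spc d × ℝ → ℝ) : Prop :=
  ∀ φ : Spc d × ℝ → ℝ, ∀ p ∈ O, ContDiffAt ℝ 2 φ p →
    IsLocalMinOn (fun q => u q - φ q) O p →
    0 ≤ timeDeriv φ p - H (spaceHess φ p) (spaceGrad φ p) p

/-- The half space `P_ν = {(x,t) : x·ν ≥ 0}`. -/
def Pnu {d : ℕ} (ν : Spc d) : Set (Spc d × ℝ) := {p | 0 ≤ dotR p.1 ν}
def bdryPnu {d : ℕ} (ν : Spc d) : Set (Spc d × ℝ) := {p | dotR p.1 ν = 0}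
def intPnu {d : ℕ} (ν : Spc d) : Set (Spc d × ℝ) := {p | 0 < dotR p.1 ν}

/-- The box `Q_L = {0 < x_ν < L, |x'| < L, |t| < L²}`. -/
def QL {d : ℕ} (ν : Spc d) (L : ℝ) : Set (Spc d × ℝ) :=
  {p | 0 < dotR p.1 ν ∧ dotR p.1 ν < L ∧ ‖p.1 - dotR p.1 ν • ν‖ < L ∧ |p.2| < L ^ 2}

def UnifElliptic {d : ℕ} {α : Type*} (lam Lam : ℝ) (F : Mat d → α → ℝ) : Prop :=
  ∀ M N : Mat d, M.IsSymm → N.PosSemidef → ∀ a : α,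
    lam * N.trace ≤ F (M + N) a - F M a ∧ F (M + N) a - F M a ≤ Lam * N.trace

/-- Bounded viscosity solution of a Dirichlet problem on `O` with boundary part `bd`. -/
def IsBddViscSolOn {d : ℕ} (O bd : Set (Spc d × ℝ)) (u : Spc d × ℝ → ℝ)
    (H : Mat d → Spc d → Spc d × ℝ → ℝ) (gbd : Spc d × ℝ → ℝ) : Prop :=
  ContinuousOn u (O ∪ bd) ∧ (∃ K : ℝ, ∀ p ∈ O ∪ bd, |u p| ≤ K) ∧
  ViscSubsol O u H ∧ ViscSupersol O u H ∧ ∀ p ∈ bd, u p = gbd p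

/-- `ℤ^d × ℤ` space-time periodicity. -/
def SpaceTimePeriodic {d : ℕ} (ρ : Spc d × ℝ → ℝ) : Prop :=
  ∀ (p : Spc d × ℝ) (k : Fin d → ℤ) (m : ℤ), ρ (p.1 + intVec k, p.2 + m) = ρ p

end


open scoped RealInnerProductSpace Matrix

noncomputable section Aux

-- extreme value theorem for upper semicontinuous functions
theorem usc_exists_max {X : Type*} [TopologicalSpace X] {s : Set X} (hs : IsCompact s)
    (hne : s.Nonempty) {f : X → ℝ} (hf : UpperSemicontinuousOn f s) :
    ∃ a ∈ s, ∀ x ∈ s, f x ≤ f a := by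
  by_contra h
  push_neg at h
  choose g hg1 hg2 using h
  have hcov : ∀ x (hx : x ∈ s), {z | z ∈ s → f z < f (g x hx)} ∈ 𝓝 x := by
    intro x hx
    have := hf x hx (f (g x hx)) (hg2 x hx)
    rw [eventually_nhdsWithin_iff] at this
    exact this
  obtain ⟨t, hts⟩ := hs.elim_nhds_subcover' (fun x hx => {z | z ∈ s → f z < f (g x hx)}) hcov
  have htne : t.Nonempty := by
    by_contra hte
    rw [Finset.not_nonempty_iff_eq_empty] at hte
    obtain ⟨y, hy⟩ := hne
    have := hts hy
    simp [hte] at this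
  obtain ⟨b, hb, hbmax⟩ := t.exists_max_image (fun x => f (g x.1 x.2)) htne
  have hgb : g b.1 b.2 ∈ s := hg1 _ _
  have := hts hgb
  simp only [Set.mem_iUnion] at this
  obtain ⟨x, hx, hmem⟩ := this
  have h1 : f (g b.1 b.2) < f (g x.1 x.2) := hmem hgb
  exact absurd (hbmax x hx) (not_le.mpr h1)

theorem sum_eig {d : ℕ} {M : Mat d} (hM : M.IsHermitian) :
    ∑ i, hM.eigenvalues i = M.trace := by
  rw [hM.trace_eq_sum_eigenvalues]
  simp

theorem eig_le {d : ℕ} {M : Mat d} (hM : M.IsHermitian) {α : ℝ}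
    (hpsd : (α • (1 : Mat d) - M).PosSemidef) (i : Fin d) : hM.eigenvalues i ≤ α := by
  set v : Fin d → ℝ := ⇑(hM.eigenvectorBasis i) with hv
  have hnorm : ‖hM.eigenvectorBasis i‖ = 1 := hM.eigenvectorBasis.orthonormal.1 i
  have hvv : dotProduct v v = 1 := by
    have : (inner ℝ (hM.eigenvectorBasis i) (hM.eigenvectorBasis i) : ℝ) = 1 := by
      rw [real_inner_self_eq_norm_sq, hnorm]; norm_num
    rw [← this, PiLp.inner_apply]
    simp [dotProduct, v, sq]
  have heig : hM.eigenvalues i = dotProduct v (M *ᵥ v) := by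
    have := hM.eigenvalues_eq i
    simpa [v] using this
  have h2 := hpsd.dotProduct_mulVec_nonneg v
  have hexp : dotProduct (star v) ((α • (1 : Mat d) - M) *ᵥ v)
      = α - dotProduct v (M *ᵥ v) := by
    rw [Matrix.sub_mulVec, dotProduct_sub]
    simp only [star_trivial]
    rw [Matrix.smul_mulVec, Matrix.one_mulVec, dotProduct_smul]
    rw [hvv]
    simp
  rw [hexp, ← heig] at h2
  linarith

theorem pucci_bound {d : ℕ} (lam Lam α : ℝ) (h0 : 0 < lam) (hll : lam ≤ Lam) (hα : 0 ≤ α)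
    (M : Mat d) (hM : M.IsHermitian) (hpsd : (α • (1 : Mat d) - M).PosSemidef) :
    pucciPlus lam Lam M ≤ lam * M.trace + (Lam - lam) * d * α := by
  rw [pucciPlus, dif_pos hM]
  have key : ∀ i : Fin d, Lam * max (hM.eigenvalues i) 0 + lam * min (hM.eigenvalues i) 0
      ≤ lam * hM.eigenvalues i + (Lam - lam) * α := by
    intro i
    have hle := eig_le hM hpsd i
    rcases le_total (hM.eigenvalues i) 0 with h | h
    · rw [max_eq_right h, min_eq_left h]
      nlinarith
    · rw [max_eq_left h, min_eq_right h]
      nlinarith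
  calc ∑ i, (Lam * max (hM.eigenvalues i) 0 + lam * min (hM.eigenvalues i) 0)
      ≤ ∑ i : Fin d, (lam * hM.eigenvalues i + (Lam - lam) * α) :=
        Finset.sum_le_sum fun i _ => key i
    _ = lam * M.trace + (Lam - lam) * d * α := by
        rw [Finset.sum_add_distrib, ← Finset.mul_sum, sum_eig hM]
        simp [Finset.sum_const, Finset.card_univ]
        ring

theorem rankOne_psd {d : ℕ} (c : ℝ) (hc : 0 ≤ c) (ν : Spc d) :
    (Matrix.of fun i j : Fin d => c * (ν i * ν j)).PosSemidef := by
  refine Matrix.PosSemidef.of_dotProduct_mulVec_nonneg ?_ ?_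
  · ext i j
    simp only [Matrix.conjTranspose_apply, Matrix.of_apply, star_trivial]
    ring
  · intro x
    have hx : dotProduct (star x) ((Matrix.of fun i j : Fin d => c * (ν i * ν j)) *ᵥ x)
        = c * ((∑ i, ν i * x i) * (∑ i, ν i * x i)) := by
      simp only [dotProduct, Matrix.mulVec, Matrix.of_apply, Pi.star_apply, star_trivial]
      rw [Finset.sum_mul_sum, Finset.mul_sum]
      apply Finset.sum_congr rfl
      intro i _
      rw [Finset.mul_sum, Finset.mul_sum]
      apply Finset.sum_congr rfl
      intro j _
      ring
    rw [hx]
    exact mul_nonneg hc (mul_self_nonneg _)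

variable {d : ℕ} (c₀ k1 k2 k3 k4 : ℝ) (ν : Spc d)

/-- The barrier function. -/
def bar (p : Spc d × ℝ) : ℝ :=
  c₀ + k1 * ⟪p.1, ν⟫ + k2 * ⟪p.1, ν⟫^2 + k3 * ‖p.1‖^2 + k4 * p.2^2

theorem dotR_eq_inner (x y : Spc d) : dotR x y = ⟪x, y⟫ := by
  rw [PiLp.inner_apply]; simp [dotR, mul_comm]

theorem hasFDerivAt_inner_right (x : Spc d) :
    HasFDerivAt (fun y : Spc d => ⟪y, ν⟫) (innerSL ℝ ν) x := by
  have h : (fun y : Spc d => ⟪y, ν⟫) = ⇑(innerSL ℝ ν) := by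
    funext y; exact real_inner_comm ν y
  rw [h]
  exact (innerSL ℝ ν).hasFDerivAt

theorem bar_hasFDerivAt (t : ℝ) (x : Spc d) :
    HasFDerivAt (fun y : Spc d => bar c₀ k1 k2 k3 k4 ν (y, t))
      ((k1 + 2*k2*⟪x,ν⟫) • (innerSL ℝ ν) + (2*k3) • (innerSL ℝ x)) x := by
  have h1 := hasFDerivAt_inner_right ν x
  have h2 : HasFDerivAt (fun y : Spc d => ⟪y,ν⟫^2)
      (⟪x,ν⟫ • (innerSL ℝ ν) + ⟪x,ν⟫ • (innerSL ℝ ν)) x := by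
    have := h1.mul h1
    exact this.congr_of_eventuallyEq (Filter.Eventually.of_forall fun y => by simp [sq])
  have h3 : HasFDerivAt (fun y : Spc d => ‖y‖^2) (2 • (innerSL ℝ x)) x :=
    (hasStrictFDerivAt_norm_sq x).hasFDerivAt
  have h4 := ((((h1.const_mul k1).add (h2.const_mul k2)).add
    (h3.const_mul k3)).add_const (k4 * t^2)).const_add c₀
  have hfun : (fun y : Spc d => bar c₀ k1 k2 k3 k4 ν (y, t))
      = (fun y : Spc d => c₀ + (k1 * ⟪y,ν⟫ + k2 * ⟪y,ν⟫^2 + k3 * ‖y‖^2 + k4 * t^2)) := by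
    funext y; simp [bar]; ring
  rw [hfun]
  refine h4.congr_fderiv ?_
  ext y
  simp
  ring

theorem bar_fderiv_apply (t : ℝ) (x v : Spc d) :
    fderiv ℝ (fun y => bar c₀ k1 k2 k3 k4 ν (y, t)) x v
      = (k1 + 2*k2*⟪x,ν⟫) * ⟪ν,v⟫ + 2*k3 * ⟪x,v⟫ := by
  rw [(bar_hasFDerivAt c₀ k1 k2 k3 k4 ν t x).fderiv]
  simp

theorem bar_spaceGrad (p : Spc d × ℝ) (i : Fin d) :
    spaceGrad (bar c₀ k1 k2 k3 k4 ν) p i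
      = (k1 + 2*k2*⟪p.1,ν⟫) * ν i + 2*k3 * p.1 i := by
  show fderiv ℝ (fun y => bar c₀ k1 k2 k3 k4 ν (y, p.2)) p.1 (EuclideanSpace.single i 1)
      = _
  rw [bar_fderiv_apply]
  rw [EuclideanSpace.inner_single_right, EuclideanSpace.inner_single_right]
  simp

theorem bar_spaceHess (p : Spc d × ℝ) (i j : Fin d) :
    spaceHess (bar c₀ k1 k2 k3 k4 ν) p i j
      = 2*k2*(ν i * ν j) + 2*k3 * (if i = j then 1 else 0) := by
  show fderiv ℝ (fun y => (fderiv ℝ (fun z => bar c₀ k1 k2 k3 k4 ν (z, p.2)) y)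
      (EuclideanSpace.single j 1)) p.1 (EuclideanSpace.single i 1) = _
  have hfun : (fun y : Spc d => (fderiv ℝ (fun z => bar c₀ k1 k2 k3 k4 ν (z, p.2)) y)
      (EuclideanSpace.single j 1))
      = fun y : Spc d => (k1 * ν j + 2*k3 * ⟪y, EuclideanSpace.single j 1⟫)
          + (2*k2*ν j) * ⟪y,ν⟫ := by
    funext y
    rw [bar_fderiv_apply]
    rw [EuclideanSpace.inner_single_right]
    simp
    ring
  rw [hfun]
  have h1 := hasFDerivAt_inner_right ν p.1
  have h2 := hasFDerivAt_inner_right (EuclideanSpace.single j 1 : Spc d) p.1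
  have h3 := ((h2.const_mul (2*k3)).const_add (k1 * ν j)).add (h1.const_mul (2*k2*ν j))
  rw [(h3.congr_of_eventuallyEq (Filter.Eventually.of_forall fun y => rfl) : HasFDerivAt
    (fun y : Spc d => (k1 * ν j + 2*k3 * ⟪y, EuclideanSpace.single j 1⟫) + (2*k2*ν j) * ⟪y,ν⟫) _ p.1).fderiv]
  simp [EuclideanSpace.inner_single_right, EuclideanSpace.single_apply]
  by_cases hij : i = j
  · simp [hij]; ring
  · ring

theorem bar_timeDeriv (p : Spc d × ℝ) :
    timeDeriv (bar c₀ k1 k2 k3 k4 ν) p = 2 * k4 * p.2 := by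
  unfold timeDeriv
  have : (fun s : ℝ => bar c₀ k1 k2 k3 k4 ν (p.1, s))
      = fun s : ℝ => (c₀ + k1 * ⟪p.1, ν⟫ + k2 * ⟪p.1, ν⟫^2 + k3 * ‖p.1‖^2) + k4 * s^2 := by
    funext s; simp [bar]
  rw [this]
  rw [deriv_const_add]
  rw [deriv_const_mul _ (by fun_prop : DifferentiableAt ℝ (fun s : ℝ => s^2) p.2)]
  rw [deriv_pow_field]
  ring

theorem bar_contDiff : ContDiff ℝ 2 (bar c₀ k1 k2 k3 k4 ν) := by
  unfold bar
  have h1 : ContDiff ℝ 2 fun p : Spc d × ℝ => ⟪p.1, ν⟫ :=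
    (contDiff_fst.inner ℝ contDiff_const)
  have h2 : ContDiff ℝ 2 fun p : Spc d × ℝ => ‖p.1‖^2 :=
    (contDiff_norm_sq ℝ).comp contDiff_fst
  have h3 : ContDiff ℝ 2 fun p : Spc d × ℝ => p.2^2 := contDiff_snd.pow 2
  exact ((((contDiff_const.add (contDiff_const.mul h1)).add
    (contDiff_const.mul (h1.pow 2))).add
    (contDiff_const.mul h2)).add (contDiff_const.mul h3))

theorem norm_decomp {d : ℕ} {ν : Spc d} (hν : ‖ν‖ = 1) (x : Spc d) :
    ‖x‖^2 = ‖x - ⟪x,ν⟫ • ν‖^2 + ⟪x,ν⟫^2 := by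
  have h := norm_sub_sq_real x ((⟪x,ν⟫ : ℝ) • ν)
  rw [real_inner_smul_right, norm_smul, hν] at h
  simp only [Real.norm_eq_abs, mul_one] at h
  rw [h, sq_abs]
  ring

end Aux

set_option maxHeartbeats 2000000 in
/-- Lemma 3.3: localization lemma with a small drift term.  The constants
`c, C` depend only on `λ, Λ, d, c₀, C₀, K`. -/
theorem stmt2 (d : ℕ) (hd : 1 ≤ d) (lam Lam c₀ C₀ K : ℝ) (hlam : 0 < lam) (hll : lam ≤ Lam)
    (hc₀ : 0 < c₀) (hcC : c₀ < C₀) (hK : 0 < K) :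
    ∃ c C : ℝ, 0 < c ∧ 0 < C ∧
      ∀ ν : Spc d, ‖ν‖ = 1 →
      ∀ c₁ c₂ : Spc d × ℝ → ℝ, Continuous c₁ → Continuous c₂ →
        (∀ p, |c₁ p| ≤ K) → (∀ p, |c₂ p| ≤ K) →
      ∀ ξ : Spc d × ℝ → Spc d, Continuous ξ → (∀ p, ‖ξ p‖ = 1) →
      ∀ ε L : ℝ, 0 < ε → 0 < L → L * ε ≤ c →
      ∀ w : Spc d × ℝ → ℝ,
        UpperSemicontinuousOn w (closure (QL ν L)) →
        ViscSubsol (QL ν L) w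
          (fun M Dw p => pucciPlus lam Lam M + (ε * c₁ p + ε ^ 3 * c₂ p * p.2) * dotR (ξ p) Dw) →
        (∀ p ∈ closure (QL ν L) ∩ bdryPnu ν, w p ≤ c₀) →
        (∀ p ∈ closure (QL ν L), w p ≤ C₀) →
        ∀ R : ℝ, R < L → ∀ p ∈ QL ν R, w p ≤ c₀ + C * R / L := by
  have hLam : 0 < Lam := lt_of_lt_of_le hlam hll
  set A := C₀ - c₀ with hAdef
  have hApos : 0 < A := by rw [hAdef]; linarith
  set m := (Lam * d + 2) / lam with hmdef
  have hm_eq : lam * m = Lam * d + 2 := by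
    rw [hmdef]; field_simp
  have hdr : (0:ℝ) ≤ (d:ℝ) := Nat.cast_nonneg d
  have hmpos : 0 < m := by
    apply div_pos ?_ hlam
    nlinarith
  set a := m + 1 with hadef
  set S := a + 2*m + 6 with hSdef
  have hSpos : 0 < S := by rw [hSdef, hadef]; linarith
  have hapos : 0 < a := by rw [hadef]; linarith
  refine ⟨min 1 (1/(2*K*S)), A*(a+2), lt_min one_pos (by positivity), by positivity, ?_⟩
  intro ν hν c₁ c₂ hc₁c hc₂c hc₁ hc₂ ξ hξc hξ ε L hε hL hLε w husc hsub hbdry hbound R hRL p hpR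
  have hL0 : L ≠ 0 := ne_of_gt hL
  set k1 := A*a/L with hk1
  set k2 := -(A*(m+1))/L^2 with hk2
  set k3 := A/L^2 with hk3
  set k4 := A/L^4 with hk4
  set φ := bar c₀ k1 k2 k3 k4 ν with hφ
  clear_value A m a S k1 k2 k3 k4
  have hν2 : (∑ i, ν i * ν i) = 1 := by
    have h1 : (inner ℝ ν ν : ℝ) = 1 := by rw [real_inner_self_eq_norm_sq, hν]; norm_num
    rw [PiLp.inner_apply] at h1
    simpa [sq] using h1
  have hcontdot : Continuous fun q : Spc d × ℝ => dotR q.1 ν := by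
    have he : (fun q : Spc d × ℝ => dotR q.1 ν) = fun q : Spc d × ℝ => (inner ℝ q.1 ν : ℝ) := by
      funext q; exact dotR_eq_inner _ _
    rw [he]; exact continuous_fst.inner continuous_const
  have hclsub : closure (QL ν L) ⊆ {q : Spc d × ℝ | 0 ≤ dotR q.1 ν ∧ dotR q.1 ν ≤ L ∧
      ‖q.1 - dotR q.1 ν • ν‖ ≤ L ∧ |q.2| ≤ L^2} := by
    apply closure_minimal
    · intro q hq
      exact ⟨le_of_lt hq.1, le_of_lt hq.2.1, le_of_lt hq.2.2.1, le_of_lt hq.2.2.2⟩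
    · have hcont2 : Continuous fun q : Spc d × ℝ => ‖q.1 - dotR q.1 ν • ν‖ :=
        (continuous_fst.sub (hcontdot.smul continuous_const)).norm
      have hcont3 : Continuous fun q : Spc d × ℝ => |q.2| := continuous_snd.abs
      exact IsClosed.inter (isClosed_le continuous_const hcontdot)
        (IsClosed.inter (isClosed_le hcontdot continuous_const)
          (IsClosed.inter (isClosed_le hcont2 continuous_const)
            (isClosed_le hcont3 continuous_const)))
  have hbounded : Bornology.IsBounded (QL ν L) := by
    have hsubB : QL ν L ⊆ (Metric.closedBall (0:Spc d) (2*L)) ×ˢ (Metric.closedBall (0:ℝ) (L^2)) := by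
      intro q hq
      obtain ⟨h1, h2, h3, h4⟩ := hq
      constructor
      · rw [Metric.mem_closedBall, dist_zero_right]
        have hn : ‖q.1‖ ≤ ‖q.1 - dotR q.1 ν • ν‖ + ‖dotR q.1 ν • ν‖ := by
          calc ‖q.1‖ = ‖(q.1 - dotR q.1 ν • ν) + dotR q.1 ν • ν‖ := by rw [sub_add_cancel]
          _ ≤ _ := norm_add_le _ _
        rw [norm_smul, hν, mul_one, Real.norm_eq_abs] at hn
        have habs : |dotR q.1 ν| ≤ L := abs_le.mpr ⟨by linarith, le_of_lt h2⟩
        linarith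
      · rw [Metric.mem_closedBall, dist_zero_right, Real.norm_eq_abs]
        exact le_of_lt h4
    exact (Metric.isBounded_closedBall.prod Metric.isBounded_closedBall).subset hsubB
  have hcompact : IsCompact (closure (QL ν L)) := hbounded.isCompact_closure
  have hQne : ((L/2) • ν, (0:ℝ)) ∈ QL ν L := by
    have hd : dotR ((L/2) • ν) ν = L/2 := by
      rw [dotR_eq_inner, real_inner_smul_left, real_inner_self_eq_norm_sq, hν]; ring
    refine ⟨by rw [hd]; linarith, by rw [hd]; linarith, ?_, by simpa using by positivity⟩
    rw [hd]
    simp only [sub_self, norm_zero]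
    linarith
  have hclne : (closure (QL ν L)).Nonempty := ⟨_, subset_closure hQne⟩
  have hφcont : Continuous φ := (bar_contDiff c₀ k1 k2 k3 k4 ν).continuous
  have husc2 : UpperSemicontinuousOn (fun q => w q - φ q) (closure (QL ν L)) := by
    have hn : UpperSemicontinuousOn (fun q => -φ q) (closure (QL ν L)) :=
      ((hφcont.neg).continuousOn).upperSemicontinuousOn
    simpa [sub_eq_add_neg] using husc.add hn
  obtain ⟨q, hqcl, hqmax⟩ := usc_exists_max hcompact hclne husc2
  have hφval : ∀ r : Spc d × ℝ, φ r = c₀ + (k1*(dotR r.1 ν) + (k2+k3)*(dotR r.1 ν)^2)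
      + k3*‖r.1 - (dotR r.1 ν) • ν‖^2 + k4*r.2^2 := by
    intro r
    have hin : (inner ℝ r.1 ν : ℝ) = dotR r.1 ν := (dotR_eq_inner r.1 ν).symm
    have hdec := norm_decomp hν r.1
    rw [hin] at hdec
    show c₀ + k1 * (inner ℝ r.1 ν : ℝ) + k2 * (inner ℝ r.1 ν : ℝ)^2 + k3 * ‖r.1‖^2 + k4 * r.2^2 = _
    rw [hin, hdec]
    ring
  have hwφq : w q ≤ φ q := by
    by_cases hqin : q ∈ QL ν L
    · exfalso
      obtain ⟨hs0, hsL, hxL, htL⟩ := hqin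
      have hmax0 : IsMaxOn (fun r => w r - φ r) (QL ν L) q :=
        fun r hr => hqmax r (subset_closure hr)
      have hmax : IsLocalMaxOn (fun r => w r - φ r) (QL ν L) q :=
        hmax0.filter_mono inf_le_right
      have hvisc := hsub φ q ⟨hs0, hsL, hxL, htL⟩
        ((bar_contDiff c₀ k1 k2 k3 k4 ν).contDiffAt) hmax
      simp only at hvisc
      set sq := dotR q.1 ν with hsqdef
      have hin : (inner ℝ q.1 ν : ℝ) = sq := (dotR_eq_inner q.1 ν).symm
      have hnormx : ‖q.1‖ ≤ 2*L := by
        have hn : ‖q.1‖ ≤ ‖q.1 - sq • ν‖ + ‖sq • ν‖ := by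
          calc ‖q.1‖ = ‖(q.1 - sq • ν) + sq • ν‖ := by rw [sub_add_cancel]
          _ ≤ _ := norm_add_le _ _
        rw [norm_smul, hν, mul_one, Real.norm_eq_abs] at hn
        have habs : |sq| ≤ L := abs_le.mpr ⟨by linarith, le_of_lt hsL⟩
        linarith [le_of_lt hxL]
      have htd : timeDeriv φ q = 2*k4*q.2 := bar_timeDeriv c₀ k1 k2 k3 k4 ν q
      have hHe : spaceHess φ q
          = Matrix.of fun i j : Fin d => 2*k2*(ν i * ν j) + 2*k3*(if i = j then 1 else 0) := by
        ext i j; exact bar_spaceHess c₀ k1 k2 k3 k4 ν q i j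
      have hHerm : (spaceHess φ q).IsHermitian := by
        rw [hHe]
        show _ᴴ = _
        ext i j
        simp only [Matrix.conjTranspose_apply, Matrix.of_apply, star_trivial]
        by_cases h : i = j
        · rw [h]
        · rw [if_neg h, if_neg (fun hh => h hh.symm)]; ring
      have hk3pos : 0 < k3 := by rw [hk3]; positivity
      have hpsd : ((2*k3) • (1 : Mat d) - spaceHess φ q).PosSemidef := by
        have heq : (2*k3) • (1 : Mat d) - spaceHess φ q
            = Matrix.of fun i j : Fin d => (-(2*k2)) * (ν i * ν j) := by
          rw [hHe]; ext i j
          by_cases h : i = j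
          · subst h; simp [Matrix.one_apply, Matrix.sub_apply, Matrix.smul_apply]
          · simp [Matrix.one_apply, Matrix.sub_apply, Matrix.smul_apply, h]
        rw [heq]
        refine rankOne_psd _ ?_ ν
        have h' : -(2*k2) = 2*(A*(m+1))/L^2 := by rw [hk2]; ring
        rw [h']
        positivity
      have htr : (spaceHess φ q).trace = 2*k2 + 2*k3*d := by
        rw [hHe]
        rw [Matrix.trace]
        simp only [Matrix.diag, Matrix.of_apply, if_pos rfl]
        rw [Finset.sum_add_distrib, ← Finset.mul_sum, hν2]
        simp [Finset.card_univ]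
        ring
      have hpucci := pucci_bound lam Lam (2*k3) hlam hll (by linarith) _ hHerm hpsd
      rw [htr] at hpucci
      have hgd : dotR (ξ q) (spaceGrad φ q)
          = (k1 + 2*k2*sq) * dotR (ξ q) ν + 2*k3 * dotR (ξ q) q.1 := by
        show (∑ i, ξ q i * spaceGrad φ q i) = _
        have hstep : ∀ i, ξ q i * spaceGrad φ q i
            = (k1+2*k2*sq) * (ξ q i * ν i) + 2*k3*(ξ q i * q.1 i) := by
          intro i
          rw [hφ, bar_spaceGrad, hin]
          ring
        rw [Finset.sum_congr rfl (fun i _ => hstep i), Finset.sum_add_distrib,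
          ← Finset.mul_sum, ← Finset.mul_sum]
        rfl
      have hd1 : |dotR (ξ q) ν| ≤ 1 := by
        rw [dotR_eq_inner]
        have h := abs_real_inner_le_norm (ξ q) ν
        rw [hξ q, hν] at h
        simpa using h
      have hd2 : |dotR (ξ q) q.1| ≤ 2*L := by
        rw [dotR_eq_inner]
        have h := abs_real_inner_le_norm (ξ q) q.1
        rw [hξ q, one_mul] at h
        linarith
      have hk12 : |k1 + 2*k2*sq| ≤ A*(a + 2*(m+1))/L := by
        have he : k1 + 2*k2*sq = A*(a*L - 2*(m+1)*sq)/L^2 := by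
          rw [hk1, hk2]; field_simp; ring
        have habs2 : |a*L - 2*(m+1)*sq| ≤ (a + 2*(m+1))*L := by
          have hapos : (0:ℝ) < a := by rw [hadef]; linarith
          have hx1 : 2*(m+1)*sq ≤ 2*(m+1)*L := mul_le_mul_of_nonneg_left hsL.le (by linarith)
          have hx2 : (0:ℝ) ≤ 2*(m+1)*sq := mul_nonneg (by linarith) hs0.le
          have hx3 : (0:ℝ) ≤ a*L := mul_nonneg hapos.le hL.le
          have hx4 : (a + 2*(m+1))*L = a*L + 2*(m+1)*L := by ring
          rw [abs_le]
          constructor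
          · linarith
          · linarith
        rw [he, abs_div, abs_mul, abs_of_pos hApos, abs_of_pos (by positivity : (0:ℝ) < L^2)]
        rw [show A*(a + 2*(m+1))/L = A*((a + 2*(m+1))*L)/L^2 by field_simp]
        apply div_le_div_of_nonneg_right ?_ (by positivity)
        · exact mul_le_mul_of_nonneg_left habs2 hApos.le
      have hgdb : |dotR (ξ q) (spaceGrad φ q)| ≤ A*S/L := by
        rw [hgd]
        calc |(k1 + 2*k2*sq) * dotR (ξ q) ν + 2*k3 * dotR (ξ q) q.1|
            ≤ |(k1 + 2*k2*sq) * dotR (ξ q) ν| + |2*k3 * dotR (ξ q) q.1| := abs_add_le _ _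
          _ = |k1 + 2*k2*sq| * |dotR (ξ q) ν| + (2*k3) * |dotR (ξ q) q.1| := by
              rw [abs_mul, abs_mul, abs_of_pos (by linarith : (0:ℝ) < 2*k3)]
          _ ≤ (A*(a + 2*(m+1))/L) * 1 + (2*k3) * (2*L) := by
              apply add_le_add
              · exact mul_le_mul hk12 hd1 (abs_nonneg _) (by positivity)
              · exact mul_le_mul_of_nonneg_left hd2 (by linarith)
          _ = A*S/L := by rw [hk3, hSdef]; field_simp; ring
      have hβ : |ε * c₁ q + ε^3 * c₂ q * q.2| ≤ K*ε + K*ε^3*L^2 := by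
        have h1 : |ε * c₁ q| ≤ K*ε := by
          rw [abs_mul, abs_of_pos hε]
          calc ε * |c₁ q| ≤ ε * K := mul_le_mul_of_nonneg_left (hc₁ q) hε.le
          _ = K*ε := by ring
        have h2 : |ε^3 * c₂ q * q.2| ≤ K*ε^3*L^2 := by
          rw [abs_mul, abs_mul, abs_of_pos (by positivity : (0:ℝ) < ε^3)]
          have := hclsub hqcl
          have ht : |q.2| ≤ L^2 := this.2.2.2
          calc ε^3 * |c₂ q| * |q.2| ≤ ε^3 * K * L^2 := by
                apply mul_le_mul ?_ ht (abs_nonneg _) (by positivity)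
                exact mul_le_mul_of_nonneg_left (hc₂ q) (by positivity)
          _ = K*ε^3*L^2 := by ring
        calc |ε * c₁ q + ε^3 * c₂ q * q.2| ≤ |ε * c₁ q| + |ε^3 * c₂ q * q.2| := abs_add_le _ _
        _ ≤ K*ε + K*ε^3*L^2 := add_le_add h1 h2
      have hdrift : |(ε * c₁ q + ε^3 * c₂ q * q.2) * dotR (ξ q) (spaceGrad φ q)| ≤ A/L^2 := by
        rw [abs_mul]
        have h1 : |ε * c₁ q + ε^3 * c₂ q * q.2| * |dotR (ξ q) (spaceGrad φ q)|
            ≤ (K*ε + K*ε^3*L^2) * (A*S/L) := by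
          apply mul_le_mul hβ hgdb (abs_nonneg _) (by positivity)
        refine le_trans h1 ?_
        have hεL1 : ε*L ≤ 1 := by
          have := le_trans hLε (min_le_left _ _)
          linarith [this, mul_comm L ε]
        have hεLS : ε*L ≤ 1/(2*K*S) := by
          have := le_trans hLε (min_le_right _ _)
          calc ε*L = L*ε := mul_comm _ _
          _ ≤ _ := this
        have h2KS : (0:ℝ) < 2*K*S := by positivity
        have hKS1 : (2*K*S)*(ε*L) ≤ 1 := by
          have := (le_div_iff₀ h2KS).mp hεLS
          linarith
        have heq : (K*ε + K*ε^3*L^2)*(A*S/L) = A*((K*(ε*L) + K*(ε*L)^3)*S)/L^2 := by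
          field_simp
        rw [heq]
        rw [show A/L^2 = A*1/L^2 by ring]
        apply div_le_div_of_nonneg_right ?_ (by positivity)
        apply mul_le_mul_of_nonneg_left ?_ hApos.le
        have hεLpos : 0 < ε*L := mul_pos hε hL
        have h2 : (ε*L)^2 ≤ 1 := by
          have h2' := mul_le_mul hεL1 hεL1 hεLpos.le zero_le_one
          rw [show (ε*L)^2 = (ε*L)*(ε*L) from by ring]
          simpa using h2'
        have hx3 : (ε*L)^3 ≤ ε*L := by
          rw [show (ε*L)^3 = (ε*L)*(ε*L)^2 from by ring]
          calc (ε*L)*(ε*L)^2 ≤ (ε*L)*1 := mul_le_mul_of_nonneg_left h2 hεLpos.le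
          _ = ε*L := mul_one _
        have hP : K*S*((ε*L)^3) ≤ K*S*(ε*L) :=
          mul_le_mul_of_nonneg_left hx3 (by positivity)
        have hexp2 : (K*(ε*L) + K*(ε*L)^3)*S = K*S*(ε*L) + K*S*((ε*L)^3) := by ring
        linarith [hP, hKS1, hexp2]
      rw [htd] at hvisc
      have hu : 0 < A/L^2 := by positivity
      have htime : -(2*(A/L^2)) ≤ 2*k4*q.2 := by
        have hql : -(L^2) ≤ q.2 := by
          have := abs_le.mp (le_of_lt htL)
          linarith [this.1]
        have h0 : 0 ≤ (2*A/L^4) * (q.2 + L^2) := mul_nonneg (by positivity) (by linarith)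
        have heq : (2*A/L^4)*(q.2+L^2) = 2*k4*q.2 + 2*(A/L^2) := by
          rw [hk4]; field_simp
        rw [heq] at h0
        linarith
      have hPle : lam*(2*k2 + 2*k3*(d:ℝ)) + (Lam - lam)*(d:ℝ)*(2*k3)
          = (A/L^2)*(2*Lam*(d:ℝ) - 2*lam*(m+1)) := by
        rw [hk2, hk3]; field_simp; ring
      have hfin : (A/L^2)*(2*Lam*(d:ℝ) - 2*lam*(m+1)) = (A/L^2)*(-4 - 2*lam) := by
        have h1 : 2*Lam*(d:ℝ) - 2*lam*(m+1) = -4 - 2*lam := by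
          have := hm_eq
          linarith
        rw [h1]
      have hdup : (ε * c₁ q + ε^3 * c₂ q * q.2) * dotR (ξ q) (spaceGrad φ q) ≤ A/L^2 :=
        le_trans (le_abs_self _) hdrift
      have hP2 : pucciPlus lam Lam (spaceHess φ q) ≤ (A/L^2)*(-4 - 2*lam) := by
        rw [← hfin, ← hPle]
        exact hpucci
      have hfinal : -(2*(A/L^2)) ≤ (A/L^2)*(-4 - 2*lam) + A/L^2 := by
        calc -(2*(A/L^2)) ≤ 2*k4*q.2 := htime
        _ ≤ pucciPlus lam Lam (spaceHess φ q)
            + (ε * c₁ q + ε^3 * c₂ q * q.2) * dotR (ξ q) (spaceGrad φ q) := by linarith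
        _ ≤ (A/L^2)*(-4 - 2*lam) + A/L^2 := add_le_add hP2 hdup
      have hexp : (A/L^2)*(-4 - 2*lam) = -4*(A/L^2) - 2*(lam*(A/L^2)) := by ring
      linarith [hfinal, hexp, mul_pos hlam hu, hu]
    · -- boundary case
      obtain ⟨hc1, hc2, hc3, hc4⟩ := hclsub hqcl
      set sq := dotR q.1 ν with hsqdef
      have hφq := hφval q
      have hquadpos : 0 ≤ k1*sq + (k2+k3)*sq^2 := by
        have he : k1*sq + (k2+k3)*sq^2 = (A*(sq*(a*L - m*sq)))/L^2 := by
          rw [hk1, hk2, hk3, hadef]; field_simp; ring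
        rw [he]
        apply div_nonneg ?_ (by positivity)
        apply mul_nonneg hApos.le
        apply mul_nonneg hc1
        have hx1 : m*sq ≤ m*L := mul_le_mul_of_nonneg_left hc2 hmpos.le
        have hx2 : m*L ≤ a*L := mul_le_mul_of_nonneg_right (by rw [hadef]; linarith) hL.le
        linarith
      have hk3' : (0:ℝ) < k3 := by rw [hk3]; positivity
      have hk4' : (0:ℝ) < k4 := by rw [hk4]; positivity
      have hnn3 : 0 ≤ k3*‖q.1 - sq • ν‖^2 := by positivity
      have hnn4 : 0 ≤ k4*q.2^2 := by positivity
      simp only [QL, Set.mem_setOf_eq, not_and_or, not_lt] at hqin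
      rcases hqin with h | h | h | h
      · -- sq = 0
        have hsq0 : sq = 0 := le_antisymm h hc1
        have hwle : w q ≤ c₀ := hbdry q ⟨hqcl, hsq0⟩
        have hz : k1*sq + (k2+k3)*sq^2 = 0 := by rw [hsq0]; ring
        rw [hφq, ← hsqdef]
        linarith [hnn3, hnn4, hwle, hz]
      · -- sq = L
        have hsqL : sq = L := le_antisymm hc2 h
        have hwle : w q ≤ C₀ := hbound q hqcl
        have hquadL : k1*L + (k2+k3)*L^2 = A := by
          rw [hk1, hk2, hk3, hadef]; field_simp; ring
        have hz : k1*sq + (k2+k3)*sq^2 = A := by rw [hsqL]; exact hquadL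
        rw [hφq, ← hsqdef]
        linarith [hnn3, hnn4, hwle, hz, hAdef]
      · -- ‖x'‖ = L
        have hwle : w q ≤ C₀ := hbound q hqcl
        have hb : A ≤ k3*‖q.1 - sq • ν‖^2 := by
          have hxe : ‖q.1 - sq • ν‖ = L := le_antisymm hc3 h
          rw [hxe, hk3, div_mul_cancel₀ A (pow_ne_zero 2 hL0)]
        rw [hφq, ← hsqdef]
        linarith [hquadpos, hnn4, hwle, hb, hAdef]
      · -- |t| = L²
        have hwle : w q ≤ C₀ := hbound q hqcl
        have hb : A ≤ k4*q.2^2 := by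
          have hte : |q.2| = L^2 := le_antisymm hc4 h
          have ht2 : q.2^2 = L^4 := by
            rw [← sq_abs, hte]
            ring
          rw [ht2, hk4, div_mul_cancel₀ A (pow_ne_zero 4 hL0)]
        rw [hφq, ← hsqdef]
        linarith [hquadpos, hnn3, hwle, hb, hAdef]
  have hkey : ∀ r ∈ closure (QL ν L), w r ≤ φ r := by
    intro r hr
    have h1 := hqmax r hr
    linarith [hwφq]
  -- final bound on QL ν R
  obtain ⟨hp1, hp2, hp3, hp4⟩ := hpR
  have hR0 : 0 < R := lt_trans hp1 hp2
  have hpL : p ∈ QL ν L := by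
    refine ⟨hp1, lt_trans hp2 hRL, lt_trans hp3 hRL, ?_⟩
    have : R^2 < L^2 := by nlinarith
    linarith
  have hwp := hkey p (subset_closure hpL)
  set sp := dotR p.1 ν with hspdef
  have hφp := hφval p
  have hb1 : k1*sp ≤ A*a*R/L := by
    rw [hk1]
    rw [show A*a*R/L = (A*a/L)*R by ring]
    apply mul_le_mul_of_nonneg_left hp2.le (by positivity)
  have hb2 : (k2+k3)*sp^2 ≤ 0 := by
    apply mul_nonpos_of_nonpos_of_nonneg ?_ (sq_nonneg _)
    rw [hk2, hk3]
    rw [show -(A*(m+1))/L^2 + A/L^2 = -(A*m/L^2) by field_simp; ring]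
    have : (0:ℝ) ≤ A*m/L^2 := by positivity
    linarith
  have hb3 : k3*‖p.1 - sp • ν‖^2 ≤ A*R/L := by
    have hx2 : ‖p.1 - sp • ν‖^2 ≤ R^2 := by
      nlinarith [norm_nonneg (p.1 - sp • ν), hp3]
    calc k3*‖p.1 - sp • ν‖^2 ≤ k3*R^2 := mul_le_mul_of_nonneg_left hx2 (by rw [hk3]; positivity)
    _ ≤ A*R/L := by
        rw [hk3, div_mul_eq_mul_div, div_le_div_iff₀ (by positivity) hL]
        have hP := mul_le_mul_of_nonneg_left hRL.le (by positivity : (0:ℝ) ≤ A*R*L)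
        linarith [hP]
  have hb4 : k4*p.2^2 ≤ A*R/L := by
    have ht2 : p.2^2 ≤ R^4 := by
      have h1 := sq_abs p.2
      nlinarith [abs_nonneg p.2, hp4]
    calc k4*p.2^2 ≤ k4*R^4 := mul_le_mul_of_nonneg_left ht2 (by rw [hk4]; positivity)
    _ ≤ A*R/L := by
        rw [hk4, div_mul_eq_mul_div, div_le_div_iff₀ (by positivity) hL]
        have hcube : R^3 ≤ L^3 := by nlinarith [hR0, hRL, sq_nonneg (L-R), sq_nonneg (L+R)]
        have hP := mul_le_mul_of_nonneg_left hcube (by positivity : (0:ℝ) ≤ A*R*L)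
        linarith [hP]
  have hsum : A*a*R/L + A*R/L + A*R/L = A*(a+2)*R/L := by ring
  have hφple : φ p ≤ c₀ + A*(a+2)*R/L := by
    rw [hφp, ← hspdef]
    linarith
  linarith
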